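/- Let x be a 2×2 matrix of nonnegative reals and z > 0. For every l ≥ 2, the size-l orbit generating function satisfies A_l(x,z) ≤ A_2(x,z)^{l/2}, where A_l(x,z) = Σ_{g,h ∈ {0,1}^O} z^{δ_π(g,h)} x^{μ(g,h)} over a size-l orbit O of the induced vertex-pair permutation (the same bound holds for user-attribute orbits with the matrix y in place of x and weight w₂ in place of w₁). -/

import Mathlib

open Finset Function

noncomputable section

/-- The set of user-user vertex pairs: unordered pairs of distinct user vertices. -/
abbrev UU (n : ℕ) : Type := {e : Sym2 (Fin n) // ¬ e.IsDiag}

/-- The set of user-attribute vertex pairs. -/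
abbrev UA (n m : ℕ) : Type := Fin n × Fin m

/-- All vertex pairs that can carry an edge. -/
abbrev Edge (n m : ℕ) : Type := UU n ⊕ UA n m

theorem mapNotDiag {n : ℕ} (π : Equiv.Perm (Fin n)) (e : UU n) :
    ¬ (Sym2.map π e.1).IsDiag := by
  obtain ⟨s, hs⟩ := e
  induction s using Sym2.ind with
  | _ a b =>
    simp only [Sym2.map_pair_eq, Sym2.mk_isDiag_iff] at *
    exact fun h => hs (π.injective h)

/-- The action of a user permutation on vertex pairs. -/
def permEdge {n m : ℕ} (π : Equiv.Perm (Fin n)) : Edge n m → Edge n m :=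
  Sum.map (fun e => (⟨Sym2.map π e.1, mapNotDiag π e⟩ : UU n)) (fun iv => (π iv.1, iv.2))

/-- The permutation `π^E` induced on vertex pairs by a user permutation `π`. -/
def permEdgeE {n m : ℕ} (π : Equiv.Perm (Fin n)) : Equiv.Perm (Edge n m) :=
  Equiv.ofBijective (permEdge π)
    (Finite.injective_iff_bijective.mp
      (Injective.sumMap
        (fun a b hab =>
          Subtype.ext (Sym2.map.injective π.injective (congrArg Subtype.val hab)))
        (fun a b hab => by
          cases a; cases b
          simpa [Prod.ext_iff, π.injective.eq_iff] using hab)))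

variable {n m : ℕ}

/-- The orbit of a vertex pair under the induced permutation, as a finite set. -/
def orbitOf (σ : Equiv.Perm (Edge n m)) (e : Edge n m) : Finset (Edge n m) :=
  univ.filter fun e' => σ.SameCycle e e'

/-- The set of orbits of the induced permutation. -/
def orbitsOf (σ : Equiv.Perm (Edge n m)) : Finset (Finset (Edge n m)) :=
  univ.image (orbitOf σ)

/-- Number of user-user orbits of size `l`. -/
def tU (σ : Equiv.Perm (Edge n m)) (l : ℕ) : ℕ :=
  ((orbitsOf σ).filter fun O => O.card = l ∧ ∀ e ∈ O, e.isLeft).card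

/-- Number of user-attribute orbits of size `l`. -/
def tA (σ : Equiv.Perm (Edge n m)) (l : ℕ) : ℕ :=
  ((orbitsOf σ).filter fun O => O.card = l ∧ ∀ e ∈ O, e.isRight).card

/-- Boolean functions on vertex pairs supported on `S` (vanishing off `S`). -/
def suppFuns (S : Finset (Edge n m)) : Finset (Edge n m → Bool) :=
  univ.filter fun g => ∀ e ∉ S, g e = false

/-- The quantity `δ_π` restricted to a set `S` of vertex pairs. -/
def deltaS (w1 w2 : ℝ) (π : Equiv.Perm (Fin n)) (S : Finset (Edge n m))
    (g h : Edge n m → Bool) : ℝ :=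
  w1 * ∑ e ∈ S.filter (fun e => e.isLeft),
      ((if g e ≠ h (permEdge π e) then (1 : ℝ) else 0) - if g e ≠ h e then 1 else 0)
  + w2 * ∑ e ∈ S.filter (fun e => e.isRight),
      ((if g e ≠ h (permEdge π e) then (1 : ℝ) else 0) - if g e ≠ h e then 1 else 0)

/-- The count `μ_{ij}` over the user-user pairs of `S`. -/
def muS (S : Finset (Edge n m)) (g h : Edge n m → Bool) (i j : Bool) : ℕ :=
  (S.filter fun e => e.isLeft ∧ g e = i ∧ h e = j).card

/-- The count `ν_{ij}` over the user-attribute pairs of `S`. -/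
def nuS (S : Finset (Edge n m)) (g h : Edge n m → Bool) (i j : Bool) : ℕ :=
  (S.filter fun e => e.isRight ∧ g e = i ∧ h e = j).card

/-- The monomial `x^{μ(g,h)}`. -/
def monU (x : Bool → Bool → ℝ) (S : Finset (Edge n m)) (g h : Edge n m → Bool) : ℝ :=
  ∏ i : Bool, ∏ j : Bool, x i j ^ muS S g h i j

/-- The monomial `y^{ν(g,h)}`. -/
def monA (y : Bool → Bool → ℝ) (S : Finset (Edge n m)) (g h : Edge n m → Bool) : ℝ :=
  ∏ i : Bool, ∏ j : Bool, y i j ^ nuS S g h i j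

/-- The generating function `A_S(x,y,z) = Σ_{g,h} z^{δ_π(g,h)} x^{μ(g,h)} y^{ν(g,h)}`
of the set `S` of vertex pairs (for `S = E` this is `A(x,y,z)`). -/
def genF (w1 w2 : ℝ) (π : Equiv.Perm (Fin n)) (x y : Bool → Bool → ℝ) (z : ℝ)
    (S : Finset (Edge n m)) : ℝ :=
  ∑ g ∈ suppFuns S, ∑ h ∈ suppFuns S,
    z ^ deltaS w1 w2 π S g h * monU x S g h * monA y S g h


/-- The closed form of the generating function of a size-2 orbit:
`A₂(x,z) = (Σ_{ij} x_{ij})² + 2x₀₀x₁₁(z^{2w} − 1) + 2x₁₀x₀₁(z^{−2w} − 1)`. -/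
def A2closed (x : Bool → Bool → ℝ) (w z : ℝ) : ℝ :=
  (x false false + x true false + x false true + x true true) ^ 2
    + 2 * x false false * x true true * (z ^ (2 * w) - 1)
    + 2 * x true false * x false true * (z ^ (-(2 * w)) - 1)

section Aux


/-- transfer-matrix path sums -/
def pS (C : Bool → Bool → ℝ) : ℕ → Bool → Bool → ℝ
  | 0 => fun a b => if a = b then 1 else 0
  | (k+1) => fun a b => ∑ c : Bool, C a c * pS C k c b

def cS (C : Bool → Bool → ℝ) (l : ℕ) : ℝ := ∑ a : Bool, pS C l a a

lemma pS_rec (C : Bool → Bool → ℝ) (k : ℕ) (a b : Bool) :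
    pS C (k+2) a b = (C false false + C true true) * pS C (k+1) a b
      - (C false false * C true true - C false true * C true false) * pS C k a b := by
  cases a <;> simp [pS, Fintype.sum_bool] <;> ring

lemma cS_closed (C : Bool → Bool → ℝ) (r s : ℝ)
    (hs : r + s = C false false + C true true)
    (hp : r * s = C false false * C true true - C false true * C true false) :
    ∀ k : ℕ, cS C (k+1) = r^(k+1) + s^(k+1) := by
  have key : ∀ k : ℕ, cS C (k+1) = r^(k+1) + s^(k+1) ∧ cS C (k+2) = r^(k+2) + s^(k+2) := by
    intro k
    induction k with
    | zero =>
      constructor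
      · simp [cS, pS, Fintype.sum_bool]
        linear_combination -hs
      · simp [cS, pS, Fintype.sum_bool]
        linear_combination (-(C false false + C true true + r + s)) * hs + 2 * hp
    | succ k ih =>
      refine ⟨ih.2, ?_⟩
      have h3 : ∀ a : Bool, pS C (k+3) a a
          = (C false false + C true true) * pS C (k+2) a a
            - (C false false * C true true - C false true * C true false) * pS C (k+1) a a :=
        fun a => pS_rec C (k+1) a a
      have : cS C (k+3) = (C false false + C true true) * cS C (k+2)
          - (C false false * C true true - C false true * C true false) * cS C (k+1) := by
        simp only [cS, h3, Finset.sum_sub_distrib, Finset.mul_sum]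
      rw [this, ih.1, ih.2]
      linear_combination (-(r^(k+2) + s^(k+2))) * hs + (r^(k+1) + s^(k+1)) * hp
  exact fun k => (key k).1

lemma pow_add_pow_le_rpow (u v : ℝ) (hu : 0 ≤ u) (hv : 0 ≤ v) (l : ℕ) (hl : 2 ≤ l) :
    u ^ l + v ^ l ≤ (u^2 + v^2) ^ ((l : ℝ)/2) := by
  obtain ⟨k, rfl⟩ : ∃ k, l = k + 2 := ⟨l - 2, by omega⟩
  have hS : 0 ≤ u^2 + v^2 := by positivity
  have hq2 : Real.sqrt (u^2+v^2) ^ 2 = u^2 + v^2 := Real.sq_sqrt hS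
  set q := Real.sqrt (u^2+v^2) with hqdef
  have hqn : 0 ≤ q := Real.sqrt_nonneg _
  have hu' : u ≤ q := by nlinarith [sq_nonneg v, sq_nonneg (u - q), sq_nonneg (u + q)]
  have hv' : v ≤ q := by nlinarith [sq_nonneg u, sq_nonneg (v - q), sq_nonneg (v + q)]
  have huk : u ^ k ≤ q ^ k := pow_le_pow_left₀ hu hu' k
  have hvk : v ^ k ≤ q ^ k := pow_le_pow_left₀ hv hv' k
  have key : u^(k+2) + v^(k+2) ≤ q^(k+2) := by
    have h1 : u^(k+2) + v^(k+2) ≤ u^2 * q^k + v^2 * q^k := by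
      have : u^(k+2) = u^2 * u^k := by ring
      rw [this]
      have : v^(k+2) = v^2 * v^k := by ring
      rw [this]
      have hA := mul_le_mul_of_nonneg_left huk (sq_nonneg u)
      have hB := mul_le_mul_of_nonneg_left hvk (sq_nonneg v)
      linarith
    have h2 : u^2 * q^k + v^2 * q^k = q^(k+2) := by
      have : u^2 * q^k + v^2 * q^k = (u^2 + v^2) * q^k := by ring
      rw [this, ← hq2]; ring
    linarith
  have hqpow : q^(k+2) = (u^2+v^2) ^ (((k+2:ℕ) : ℝ)/2) := by
    rw [hqdef, Real.sqrt_eq_rpow, ← Real.rpow_natCast ((u^2+v^2) ^ (1/(2:ℝ))) (k+2),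
      ← Real.rpow_mul hS]
    norm_num
    ring_nf
  rw [← hqpow]; exact key

lemma cS_le (C : Bool → Bool → ℝ) (hC : ∀ a b, 0 ≤ C a b) (l : ℕ) (hl : 2 ≤ l) :
    cS C l ≤ (C false false ^ 2 + C true true ^ 2
      + 2 * C false true * C true false) ^ ((l : ℝ)/2) := by
  have hdisc : 0 ≤ (C false false + C true true)^2
      - 4 * (C false false * C true true - C false true * C true false) := by
    nlinarith [sq_nonneg (C false false - C true true),
      mul_nonneg (hC false true) (hC true false)]
  set t : ℝ := C false false + C true true with htdef
  set d : ℝ := C false false * C true true - C false true * C true false with hddef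
  have hs2 : Real.sqrt (t^2 - 4*d) ^ 2 = t^2 - 4*d := Real.sq_sqrt hdisc
  set s : ℝ := Real.sqrt (t^2 - 4*d) with hsdef
  have hsnn : 0 ≤ s := Real.sqrt_nonneg _
  have htnn : 0 ≤ t := add_nonneg (hC false false) (hC true true)
  have hsum : (t+s)/2 + (t-s)/2 = C false false + C true true := by
    rw [htdef]; ring
  have hprod : ((t+s)/2) * ((t-s)/2) = C false false * C true true
      - C false true * C true false := by
    have h : ((t+s)/2) * ((t-s)/2) = (t^2 - s^2)/4 := by ring
    rw [h, hs2, htdef, hddef]; ring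
  obtain ⟨k, rfl⟩ : ∃ k, l = k + 1 := ⟨l - 1, by omega⟩
  rw [cS_closed C ((t+s)/2) ((t-s)/2) hsum hprod k]
  have hr1 : 0 ≤ (t+s)/2 := by positivity
  have h2 : ((t-s)/2)^(k+1) ≤ |(t-s)/2|^(k+1) := by
    rw [← abs_pow]; exact le_abs_self _
  have habs : (0:ℝ) ≤ |(t-s)/2| := abs_nonneg _
  have hbase : ((t+s)/2)^2 + |(t-s)/2|^2
      = C false false ^ 2 + C true true ^ 2 + 2 * C false true * C true false := by
    rw [sq_abs]
    linear_combination ((t+s)/2 + (t-s)/2 + C false false + C true true) * hsum - 2 * hprod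
  calc ((t+s)/2)^(k+1) + ((t-s)/2)^(k+1)
      ≤ ((t+s)/2)^(k+1) + |(t-s)/2|^(k+1) := by linarith
    _ ≤ (((t+s)/2)^2 + |(t-s)/2|^2) ^ (((k+1:ℕ) : ℝ)/2) :=
        pow_add_pow_le_rpow _ _ hr1 habs (k+1) hl
    _ = _ := by rw [hbase]


def pprod (C : Bool → Bool → ℝ) (k : ℕ) (w : Fin (k+1) → Bool) : ℝ :=
  ∏ i : Fin k, C (w i.castSucc) (w i.succ)

lemma psum (C : Bool → Bool → ℝ) :
    ∀ (k : ℕ) (a b : Bool),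
      (∑ w : Fin (k+1) → Bool, if w 0 = a ∧ w (Fin.last k) = b then pprod C k w else 0)
        = pS C k a b := by
  intro k
  induction k with
  | zero =>
    intro a b
    rw [← Equiv.sum_comp (Equiv.funUnique (Fin 1) Bool).symm]
    cases a <;> cases b <;>
      simp [pprod, pS, Equiv.funUnique, Fintype.sum_bool]
  | succ k ih =>
    intro a b
    rw [← Equiv.sum_comp (Fin.consEquiv (fun _ : Fin (k+2) => Bool)), Fintype.sum_prod_type]
    have hsplit : ∀ (c : Bool) (u : Fin (k+1) → Bool),
        pprod C (k+1) (Fin.cons c u) = C c (u 0) * pprod C k u := by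
      intro c u
      rw [pprod, Fin.prod_univ_succ]
      have h0 : C ((Fin.cons c u : Fin (k+2) → Bool) ((0 : Fin (k+1)).castSucc))
          ((Fin.cons c u : Fin (k+2) → Bool) ((0 : Fin (k+1)).succ)) = C c (u 0) := by
        simp
      rw [h0, pprod]
      congr 1
    have hcond : ∀ (c : Bool) (u : Fin (k+1) → Bool),
        (Fin.cons c u : Fin (k+2) → Bool) (Fin.last (k+1)) = u (Fin.last k) := by
      intro c u
      rw [← Fin.succ_last, Fin.cons_succ]
    calc (∑ c : Bool, ∑ u : Fin (k+1) → Bool,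
          if (Fin.consEquiv (fun _ : Fin (k+2) => Bool)) (c, u) 0 = a ∧
             (Fin.consEquiv (fun _ : Fin (k+2) => Bool)) (c, u) (Fin.last (k+1)) = b then
            pprod C (k+1) ((Fin.consEquiv (fun _ : Fin (k+2) => Bool)) (c, u)) else 0)
        = ∑ c : Bool, ∑ u : Fin (k+1) → Bool,
            (if c = a then (if u (Fin.last k) = b then C c (u 0) * pprod C k u else 0) else 0) := by
          refine Finset.sum_congr rfl fun c _ => Finset.sum_congr rfl fun u _ => ?_
          have hc : (Fin.consEquiv (fun _ : Fin (k+2) => Bool)) (c, u) = Fin.cons c u := rfl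
          rw [hc, hsplit, hcond, Fin.cons_zero, ite_and]
      _ = ∑ u : Fin (k+1) → Bool,
            (if u (Fin.last k) = b then C a (u 0) * pprod C k u else 0) := by
          rw [Finset.sum_comm]
          refine Finset.sum_congr rfl fun u _ => ?_
          rw [Finset.sum_ite_eq' Finset.univ a
            (fun c => if u (Fin.last k) = b then C c (u 0) * pprod C k u else 0)]
          simp
      _ = pS C (k+1) a b := by
          rw [show pS C (k+1) a b = ∑ c : Bool, C a c * pS C k c b from rfl]
          simp only [← ih, Finset.mul_sum]
          rw [Finset.sum_comm]
          refine Finset.sum_congr rfl fun u _ => ?_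
          simp only [mul_ite, mul_zero, ite_and]
          rw [Finset.sum_ite_eq Finset.univ (u 0)
            (fun c => if u (Fin.last k) = b then C a c * pprod C k u else 0)]
          simp

lemma cyc (C : Bool → Bool → ℝ) (k : ℕ) :
    (∑ u : Fin (k+1) → Bool, ∏ i : Fin (k+1), C (u i) (u (i+1))) = cS C (k+1) := by
  have snoc_succ : ∀ (u : Fin (k+1) → Bool) (i : Fin (k+1)),
      (Fin.snoc u (u 0) : Fin (k+2) → Bool) i.succ = u (i+1) := by
    intro u i
    rcases eq_or_ne i (Fin.last k) with rfl | h
    · rw [Fin.succ_last, Fin.snoc_last, Fin.last_add_one]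
    · have hlt : i < Fin.last k := lt_of_le_of_ne (Fin.le_last i) h
      have hcast : i.succ = (i+1).castSucc := by
        ext
        simp [Fin.val_add_one_of_lt hlt]
      rw [hcast, Fin.snoc_castSucc]
  have rhs : cS C (k+1)
      = ∑ w : Fin (k+2) → Bool, (if w (Fin.last (k+1)) = w 0 then pprod C (k+1) w else 0) := by
    rw [cS]
    simp only [← psum C (k+1)]
    rw [Finset.sum_comm]
    refine Finset.sum_congr rfl fun w _ => ?_
    simp only [ite_and]
    rw [Finset.sum_ite_eq Finset.univ (w 0)
      (fun a => if w (Fin.last (k+1)) = a then pprod C (k+1) w else 0)]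
    simp
  rw [rhs, ← Equiv.sum_comp (Fin.snocEquiv (fun _ : Fin (k+2) => Bool)), Fintype.sum_prod_type]
  rw [Finset.sum_comm]
  refine Finset.sum_congr rfl fun u _ => ?_
  symm
  have hval : ∀ c : Bool, (Fin.snocEquiv (fun _ : Fin (k+2) => Bool)) (c, u)
      = (Fin.snoc u c : Fin (k+2) → Bool) := fun c => rfl
  have h0 : ∀ c : Bool, (Fin.snoc u c : Fin (k+2) → Bool) 0 = u 0 := by
    intro c
    rw [show (0 : Fin (k+2)) = (0 : Fin (k+1)).castSucc from rfl, Fin.snoc_castSucc]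
  calc (∑ c : Bool, if (Fin.snocEquiv (fun _ : Fin (k+2) => Bool)) (c, u) (Fin.last (k+1))
          = (Fin.snocEquiv (fun _ : Fin (k+2) => Bool)) (c, u) 0 then
          pprod C (k+1) ((Fin.snocEquiv (fun _ : Fin (k+2) => Bool)) (c, u)) else 0)
      = ∑ c : Bool, (if c = u 0 then pprod C (k+1) (Fin.snoc u c) else 0) := by
        refine Finset.sum_congr rfl fun c _ => ?_
        rw [hval, Fin.snoc_last, h0]
    _ = pprod C (k+1) (Fin.snoc u (u 0)) := by
        rw [Finset.sum_ite_eq' Finset.univ (u 0) (fun c => pprod C (k+1) (Fin.snoc u c))]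
        simp
    _ = ∏ i : Fin (k+1), C (u i) (u (i+1)) := by
        rw [pprod]
        refine Finset.prod_congr rfl fun i _ => ?_
        rw [Fin.snoc_castSucc, snoc_succ]

def extFun (S : Finset (Edge n m)) (G : {e // e ∈ S} → Bool) : Edge n m → Bool :=
  fun e => if h : e ∈ S then G ⟨e, h⟩ else false

lemma extFun_mem (S : Finset (Edge n m)) (G : {e // e ∈ S} → Bool) {e : Edge n m}
    (h : e ∈ S) : extFun S G e = G ⟨e, h⟩ := dif_pos h

lemma restrict_ext (S : Finset (Edge n m)) {g : Edge n m → Bool} (hg : g ∈ suppFuns S) :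
    extFun S (fun e : {e // e ∈ S} => g e.1) = g := by
  funext e
  by_cases h : e ∈ S
  · exact dif_pos h
  · rw [extFun, dif_neg h]
    exact ((Finset.mem_filter.mp hg).2 e h).symm

lemma sum_suppFuns (S : Finset (Edge n m)) (Φ : (Edge n m → Bool) → ℝ) :
    ∑ g ∈ suppFuns S, Φ g = ∑ G : {e // e ∈ S} → Bool, Φ (extFun S G) := by
  classical
  refine Finset.sum_nbij' (fun g => fun e : {e // e ∈ S} => g e.1) (fun G => extFun S G)
    (fun g _ => Finset.mem_univ _) ?_ ?_ ?_ ?_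
  · intro G _
    exact Finset.mem_filter.mpr ⟨Finset.mem_univ _, fun e he => dif_neg he⟩
  · intro g hg
    exact restrict_ext S hg
  · intro G _
    funext e
    exact dif_pos e.2
  · intro g hg
    rw [restrict_ext S hg]

lemma orbit_mem_apply (σ : Equiv.Perm (Edge n m)) {e0 e : Edge n m}
    (h : e ∈ orbitOf σ e0) : σ e ∈ orbitOf σ e0 := by
  rw [orbitOf, Finset.mem_filter] at h ⊢
  exact ⟨Finset.mem_univ _, h.2.apply_right⟩

lemma orbit_side (σ : Equiv.Perm (Edge n m)) (hside : ∀ e, (σ e).isLeft = e.isLeft)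
    {e0 e : Edge n m} (he : e ∈ orbitOf σ e0) : e.isLeft = e0.isLeft := by
  have hsc : σ.SameCycle e0 e := (Finset.mem_filter.mp he).2
  obtain ⟨i, -, hi⟩ := hsc.exists_pow_eq'
  have key : ∀ (j : ℕ) (x : Edge n m), ((σ ^ j) x).isLeft = x.isLeft := by
    intro j
    induction j with
    | zero => intro x; simp
    | succ j ih => intro x; rw [pow_succ, Equiv.Perm.mul_apply, ih, hside]
  rw [← hi, key]

lemma exists_orbit_equiv (σ : Equiv.Perm (Edge n m)) (e0 : Edge n m) :
    ∃ k : ℕ, (orbitOf σ e0).card = k + 1 ∧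
      ∃ E : Fin (k+1) ≃ {e // e ∈ orbitOf σ e0}, ∀ i, σ (E i).1 = (E (i + 1)).1 := by
  classical
  have hfix : (⇑σ)^[orderOf σ] e0 = e0 := by
    rw [Equiv.Perm.iterate_eq_pow, pow_orderOf_eq_one]; rfl
  have hper : e0 ∈ Function.periodicPts ⇑σ := ⟨orderOf σ, orderOf_pos σ, hfix⟩
  have hppos : 0 < Function.minimalPeriod (⇑σ) e0 :=
    Function.minimalPeriod_pos_of_mem_periodicPts hper
  obtain ⟨k, hpk⟩ : ∃ k, Function.minimalPeriod (⇑σ) e0 = k + 1 :=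
    ⟨Function.minimalPeriod (⇑σ) e0 - 1, by omega⟩
  have hmod : ∀ j : ℕ, (⇑σ)^[j % (k+1)] e0 = (⇑σ)^[j] e0 := by
    intro j
    have h := Function.iterate_mod_minimalPeriod_eq (f := ⇑σ) (x := e0) (n := j)
    rwa [hpk] at h
  have hinjIio : (Set.Iio (k+1)).InjOn ((⇑σ)^[·] e0) := by
    have h := Function.iterate_injOn_Iio_minimalPeriod (f := ⇑σ) (x := e0)
    rwa [hpk] at h
  have hmem : ∀ j : ℕ, (⇑σ)^[j] e0 ∈ orbitOf σ e0 := by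
    intro j
    refine Finset.mem_filter.mpr ⟨Finset.mem_univ _, ⟨(j : ℤ), ?_⟩⟩
    rw [zpow_natCast, ← Equiv.Perm.iterate_eq_pow]
  have hinj : Function.Injective (fun i : Fin (k+1) =>
      (⟨(⇑σ)^[i.1] e0, hmem i.1⟩ : {e // e ∈ orbitOf σ e0})) := by
    intro i j hij
    exact Fin.ext (hinjIio i.2 j.2 (congrArg Subtype.val hij))
  have hsurj : Function.Surjective (fun i : Fin (k+1) =>
      (⟨(⇑σ)^[i.1] e0, hmem i.1⟩ : {e // e ∈ orbitOf σ e0})) := by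
    rintro ⟨e, he⟩
    have hsc : σ.SameCycle e0 e := (Finset.mem_filter.mp he).2
    obtain ⟨i, -, hi⟩ := hsc.exists_pow_eq'
    refine ⟨⟨i % (k+1), Nat.mod_lt _ (by omega)⟩, Subtype.ext ?_⟩
    show (⇑σ)^[i % (k+1)] e0 = e
    rw [hmod, Equiv.Perm.iterate_eq_pow]
    exact hi
  refine ⟨k, ?_, Equiv.ofBijective _ ⟨hinj, hsurj⟩, ?_⟩
  · rw [← Fintype.card_coe, ← Fintype.card_fin (k+1)]
    exact (Fintype.card_congr (Equiv.ofBijective _ ⟨hinj, hsurj⟩)).symm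
  · intro i
    show σ ((⇑σ)^[i.1] e0) = (⇑σ)^[((i + 1 : Fin (k+1))).1] e0
    have hval : ((i + 1 : Fin (k+1))).1 = (i.1 + 1) % (k+1) := by
      rw [Fin.val_add, Fin.val_one', Nat.add_mod_mod]
    rw [hval, hmod]
    exact (Function.iterate_succ_apply' (⇑σ) i.1 e0).symm

lemma rpow_finset_sum {z : ℝ} (hz : 0 < z) {α : Type*} (s : Finset α) (f : α → ℝ) :
    z ^ (∑ e ∈ s, f e) = ∏ e ∈ s, z ^ f e := by
  classical
  induction s using Finset.cons_induction with
  | empty => simp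
  | cons a s ha ih => rw [Finset.sum_cons, Finset.prod_cons, Real.rpow_add hz, ih]

def Cfun (w : ℝ) (M : Bool → Bool → ℝ) (z : ℝ) (b b' : Bool) : ℝ :=
  ∑ a : Bool, z ^ (w * ((if a ≠ b' then (1:ℝ) else 0) - if a ≠ b then 1 else 0)) * M a b

lemma Cfun_nonneg (w : ℝ) (M : Bool → Bool → ℝ) (hM : ∀ i j, 0 ≤ M i j) (z : ℝ)
    (hz : 0 < z) (b b' : Bool) : 0 ≤ Cfun w M z b b' :=
  Finset.sum_nonneg fun a _ => mul_nonneg (Real.rpow_nonneg hz.le _) (hM a b)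

lemma A2_Cfun (w : ℝ) (M : Bool → Bool → ℝ) (z : ℝ) (hz : 0 < z) :
    Cfun w M z false false ^ 2 + Cfun w M z true true ^ 2
      + 2 * Cfun w M z false true * Cfun w M z true false = A2closed M w z := by
  have hPN : z ^ w * z ^ (-w) = 1 := by
    rw [← Real.rpow_add hz]; simp
  have h2 : z ^ (2*w) = z ^ w * z ^ w := by
    rw [← Real.rpow_add hz, two_mul]
  have h2' : z ^ (-(2*w)) = z ^ (-w) * z ^ (-w) := by
    rw [← Real.rpow_add hz]; congr 1; ring
  have e1 : Cfun w M z false false = M true false + M false false := by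
    simp [Cfun, Fintype.sum_bool]
  have e2 : Cfun w M z true true = M true true + M false true := by
    simp [Cfun, Fintype.sum_bool]
  have e3 : Cfun w M z false true = z ^ (-w) * M true false + z ^ w * M false false := by
    simp [Cfun, Fintype.sum_bool]
  have e4 : Cfun w M z true false = z ^ w * M true true + z ^ (-w) * M false true := by
    simp [Cfun, Fintype.sum_bool]
  rw [e1, e2, e3, e4, A2closed, h2, h2']
  linear_combination (2 * M false false * M false true + 2 * M true false * M true true) * hPN

lemma core_bound (σ : Equiv.Perm (Edge n m)) (e0 : Edge n m)
    (w : ℝ) (M : Bool → Bool → ℝ) (hM : ∀ i j, 0 ≤ M i j) (z : ℝ) (hz : 0 < z)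
    (hl : 2 ≤ (orbitOf σ e0).card) :
    (∑ g ∈ suppFuns (orbitOf σ e0), ∑ h ∈ suppFuns (orbitOf σ e0),
        z ^ (w * ∑ e ∈ orbitOf σ e0,
            ((if g e ≠ h (σ e) then (1:ℝ) else 0) - if g e ≠ h e then 1 else 0))
          * ∏ e ∈ orbitOf σ e0, M (g e) (h e))
      ≤ A2closed M w z ^ (((orbitOf σ e0).card : ℝ)/2) := by
  classical
  obtain ⟨k, hcard, E, hstep⟩ := exists_orbit_equiv σ e0
  have hk2 : 2 ≤ k + 1 := hcard ▸ hl
  have main_eq : (∑ g ∈ suppFuns (orbitOf σ e0), ∑ h ∈ suppFuns (orbitOf σ e0),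
      z ^ (w * ∑ e ∈ orbitOf σ e0,
          ((if g e ≠ h (σ e) then (1:ℝ) else 0) - if g e ≠ h e then 1 else 0))
        * ∏ e ∈ orbitOf σ e0, M (g e) (h e)) = cS (Cfun w M z) (k+1) := by
    have step1 : ∀ g h : Edge n m → Bool,
        z ^ (w * ∑ e ∈ orbitOf σ e0,
            ((if g e ≠ h (σ e) then (1:ℝ) else 0) - if g e ≠ h e then 1 else 0))
          * ∏ e ∈ orbitOf σ e0, M (g e) (h e)
        = ∏ e ∈ orbitOf σ e0,
            (z ^ (w * ((if g e ≠ h (σ e) then (1:ℝ) else 0) - if g e ≠ h e then 1 else 0))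
              * M (g e) (h e)) := by
      intro g h
      rw [Finset.mul_sum, rpow_finset_sum hz, Finset.prod_mul_distrib]
    calc (∑ g ∈ suppFuns (orbitOf σ e0), ∑ h ∈ suppFuns (orbitOf σ e0),
          z ^ (w * ∑ e ∈ orbitOf σ e0,
              ((if g e ≠ h (σ e) then (1:ℝ) else 0) - if g e ≠ h e then 1 else 0))
            * ∏ e ∈ orbitOf σ e0, M (g e) (h e))
        = ∑ g ∈ suppFuns (orbitOf σ e0), ∑ h ∈ suppFuns (orbitOf σ e0),
            ∏ e ∈ orbitOf σ e0,
              (z ^ (w * ((if g e ≠ h (σ e) then (1:ℝ) else 0) - if g e ≠ h e then 1 else 0))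
                * M (g e) (h e)) :=
          Finset.sum_congr rfl fun g _ => Finset.sum_congr rfl fun h _ => step1 g h
      _ = ∑ G : {e // e ∈ orbitOf σ e0} → Bool, ∑ H : {e // e ∈ orbitOf σ e0} → Bool,
            ∏ e ∈ orbitOf σ e0,
              (z ^ (w * ((if extFun (orbitOf σ e0) G e ≠ extFun (orbitOf σ e0) H (σ e)
                    then (1:ℝ) else 0)
                  - if extFun (orbitOf σ e0) G e ≠ extFun (orbitOf σ e0) H e then 1 else 0))
                * M (extFun (orbitOf σ e0) G e) (extFun (orbitOf σ e0) H e)) := by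
          rw [sum_suppFuns]
          exact Finset.sum_congr rfl fun G _ => sum_suppFuns (orbitOf σ e0) _
      _ = ∑ H : {e // e ∈ orbitOf σ e0} → Bool, ∑ G : {e // e ∈ orbitOf σ e0} → Bool,
            ∏ e : {e // e ∈ orbitOf σ e0},
              (z ^ (w * ((if G e ≠ H ⟨σ e.1, orbit_mem_apply σ e.2⟩ then (1:ℝ) else 0)
                  - if G e ≠ H e then 1 else 0))
                * M (G e) (H e)) := by
          rw [Finset.sum_comm]
          refine Finset.sum_congr rfl fun H _ => Finset.sum_congr rfl fun G _ => ?_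
          rw [← Finset.prod_coe_sort]
          refine Finset.prod_congr rfl fun e _ => ?_
          rw [extFun_mem (orbitOf σ e0) G e.2, extFun_mem (orbitOf σ e0) H e.2,
            extFun_mem (orbitOf σ e0) H (orbit_mem_apply σ e.2)]
      _ = ∑ H : {e // e ∈ orbitOf σ e0} → Bool,
            ∏ e : {e // e ∈ orbitOf σ e0},
              Cfun w M z (H e) (H ⟨σ e.1, orbit_mem_apply σ e.2⟩) := by
          refine Finset.sum_congr rfl fun H _ => ?_
          rw [← Fintype.piFinset_univ,
            ← Finset.prod_univ_sum (fun _ : {e // e ∈ orbitOf σ e0} => (Finset.univ : Finset Bool))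
              (fun e a => z ^ (w * ((if a ≠ H ⟨σ e.1, orbit_mem_apply σ e.2⟩ then (1:ℝ) else 0)
                  - if a ≠ H e then 1 else 0)) * M a (H e))]
          rfl
      _ = ∑ u : Fin (k+1) → Bool, ∏ i : Fin (k+1), Cfun w M z (u i) (u (i+1)) := by
          rw [← Equiv.sum_comp (Equiv.arrowCongr E (Equiv.refl Bool))]
          refine Finset.sum_congr rfl fun u _ => ?_
          rw [← Equiv.prod_comp E]
          refine Finset.prod_congr rfl fun i _ => ?_
          have h2 : (⟨σ (E i).1, orbit_mem_apply σ (E i).2⟩ : {e // e ∈ orbitOf σ e0})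
              = E (i+1) := Subtype.ext (hstep i)
          have h1 : (Equiv.arrowCongr E (Equiv.refl Bool)) u (E i) = u i := by
            simp [Equiv.arrowCongr]
          have h3 : (Equiv.arrowCongr E (Equiv.refl Bool)) u
              (⟨σ (E i).1, orbit_mem_apply σ (E i).2⟩ : {e // e ∈ orbitOf σ e0}) = u (i+1) := by
            rw [h2]; simp [Equiv.arrowCongr]
          rw [h1, h3]
      _ = cS (Cfun w M z) (k+1) := cyc (Cfun w M z) k
  rw [main_eq]
  calc cS (Cfun w M z) (k+1)
      ≤ (Cfun w M z false false ^ 2 + Cfun w M z true true ^ 2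
          + 2 * Cfun w M z false true * Cfun w M z true false) ^ (((k+1 : ℕ) : ℝ)/2) :=
        cS_le (Cfun w M z) (Cfun_nonneg w M hM z hz) (k+1) hk2
    _ = A2closed M w z ^ (((orbitOf σ e0).card : ℝ)/2) := by
        rw [A2_Cfun w M z hz, hcard]

lemma deltaS_left {S : Finset (Edge n m)} (hL : ∀ e ∈ S, e.isLeft = true)
    (w1 w2 : ℝ) (π : Equiv.Perm (Fin n)) (g h : Edge n m → Bool) :
    deltaS w1 w2 π S g h
      = w1 * ∑ e ∈ S, ((if g e ≠ h (permEdge π e) then (1:ℝ) else 0)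
          - if g e ≠ h e then 1 else 0) := by
  rw [deltaS, Finset.filter_true_of_mem (fun e he => hL e he),
    Finset.filter_false_of_mem (fun e he hR => by have := hL e he; cases e <;> simp_all),
    Finset.sum_empty, mul_zero, add_zero]

lemma deltaS_right {S : Finset (Edge n m)} (hR : ∀ e ∈ S, e.isRight = true)
    (w1 w2 : ℝ) (π : Equiv.Perm (Fin n)) (g h : Edge n m → Bool) :
    deltaS w1 w2 π S g h
      = w2 * ∑ e ∈ S, ((if g e ≠ h (permEdge π e) then (1:ℝ) else 0)
          - if g e ≠ h e then 1 else 0) := by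
  rw [deltaS, Finset.filter_true_of_mem (fun e he => hR e he),
    Finset.filter_false_of_mem (fun e he hL => by have := hR e he; cases e <;> simp_all),
    Finset.sum_empty, mul_zero, zero_add]

lemma monU_left {S : Finset (Edge n m)} (hL : ∀ e ∈ S, e.isLeft = true)
    (x : Bool → Bool → ℝ) (g h : Edge n m → Bool) :
    monU x S g h = ∏ e ∈ S, x (g e) (h e) := by
  have hmu : ∀ i j, muS S g h i j = ∑ e ∈ S, (if g e = i ∧ h e = j then 1 else 0) := by
    intro i j
    rw [muS, Finset.card_filter]
    exact Finset.sum_congr rfl fun e he => by simp [hL e he]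
  rw [monU]
  simp only [hmu]
  calc ∏ i : Bool, ∏ j : Bool, x i j ^ (∑ e ∈ S, if g e = i ∧ h e = j then 1 else 0)
      = ∏ i : Bool, ∏ j : Bool, ∏ e ∈ S, x i j ^ (if g e = i ∧ h e = j then 1 else 0) := by
        refine Finset.prod_congr rfl fun i _ => Finset.prod_congr rfl fun j _ => ?_
        rw [Finset.prod_pow_eq_pow_sum]
    _ = ∏ i : Bool, ∏ e ∈ S, ∏ j : Bool, x i j ^ (if g e = i ∧ h e = j then 1 else 0) := by
        exact Finset.prod_congr rfl fun i _ => Finset.prod_comm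
    _ = ∏ e ∈ S, ∏ i : Bool, ∏ j : Bool, x i j ^ (if g e = i ∧ h e = j then 1 else 0) :=
        Finset.prod_comm
    _ = ∏ e ∈ S, x (g e) (h e) := by
        refine Finset.prod_congr rfl fun e _ => ?_
        cases hg : g e <;> cases hh : h e <;> simp [Fintype.prod_bool]

lemma monA_right {S : Finset (Edge n m)} (hR : ∀ e ∈ S, e.isRight = true)
    (y : Bool → Bool → ℝ) (g h : Edge n m → Bool) :
    monA y S g h = ∏ e ∈ S, y (g e) (h e) := by
  have hnu : ∀ i j, nuS S g h i j = ∑ e ∈ S, (if g e = i ∧ h e = j then 1 else 0) := by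
    intro i j
    rw [nuS, Finset.card_filter]
    exact Finset.sum_congr rfl fun e he => by simp [hR e he]
  rw [monA]
  simp only [hnu]
  calc ∏ i : Bool, ∏ j : Bool, y i j ^ (∑ e ∈ S, if g e = i ∧ h e = j then 1 else 0)
      = ∏ i : Bool, ∏ j : Bool, ∏ e ∈ S, y i j ^ (if g e = i ∧ h e = j then 1 else 0) := by
        refine Finset.prod_congr rfl fun i _ => Finset.prod_congr rfl fun j _ => ?_
        rw [Finset.prod_pow_eq_pow_sum]
    _ = ∏ i : Bool, ∏ e ∈ S, ∏ j : Bool, y i j ^ (if g e = i ∧ h e = j then 1 else 0) := by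
        exact Finset.prod_congr rfl fun i _ => Finset.prod_comm
    _ = ∏ e ∈ S, ∏ i : Bool, ∏ j : Bool, y i j ^ (if g e = i ∧ h e = j then 1 else 0) :=
        Finset.prod_comm
    _ = ∏ e ∈ S, y (g e) (h e) := by
        refine Finset.prod_congr rfl fun e _ => ?_
        cases hg : g e <;> cases hh : h e <;> simp [Fintype.prod_bool]

lemma monA_left {S : Finset (Edge n m)} (hL : ∀ e ∈ S, e.isLeft = true)
    (y : Bool → Bool → ℝ) (g h : Edge n m → Bool) :
    monA y S g h = 1 := by
  have hnu : ∀ i j, nuS S g h i j = 0 := by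
    intro i j
    rw [nuS, Finset.card_eq_zero, Finset.filter_eq_empty_iff]
    intro e he
    have := hL e he
    cases e <;> simp_all
  simp [monA, hnu]

lemma monU_right {S : Finset (Edge n m)} (hR : ∀ e ∈ S, e.isRight = true)
    (x : Bool → Bool → ℝ) (g h : Edge n m → Bool) :
    monU x S g h = 1 := by
  have hmu : ∀ i j, muS S g h i j = 0 := by
    intro i j
    rw [muS, Finset.card_eq_zero, Finset.filter_eq_empty_iff]
    intro e he
    have := hR e he
    cases e <;> simp_all
  simp [monU, hmu]

end Aux

/-- **Fact 2.** For nonnegative `x` (and `y`) and `z > 0`, the generating function of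
any orbit of size `l ≥ 2` is at most `A₂^{l/2}`, both for user-user orbits (with the
matrix `x` and weight `w₁`) and for user-attribute orbits (with `y` and `w₂`). -/
theorem genF_orbit_le_A2_pow
    (n m : ℕ) (π : Equiv.Perm (Fin n)) (w1 w2 : ℝ)
    (x y : Bool → Bool → ℝ) (hx : ∀ i j, 0 ≤ x i j) (hy : ∀ i j, 0 ≤ y i j)
    (z : ℝ) (hz : 0 < z) :
    (∀ e : Edge n m, e.isLeft →
      2 ≤ (orbitOf (permEdgeE (n := n) (m := m) π) e).card →
      genF w1 w2 π x y z (orbitOf (permEdgeE (n := n) (m := m) π) e) ≤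
        A2closed x w1 z ^
          (((orbitOf (permEdgeE (n := n) (m := m) π) e).card : ℝ) / 2)) ∧
    (∀ e : Edge n m, e.isRight →
      2 ≤ (orbitOf (permEdgeE (n := n) (m := m) π) e).card →
      genF w1 w2 π x y z (orbitOf (permEdgeE (n := n) (m := m) π) e) ≤
        A2closed y w2 z ^
          (((orbitOf (permEdgeE (n := n) (m := m) π) e).card : ℝ) / 2)) := by
  have hside : ∀ e : Edge n m, ((permEdgeE (n := n) (m := m) π) e).isLeft = e.isLeft := by
    intro e; cases e <;> rfl
  constructor
  · intro e0 hleft hcard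
    have hLall : ∀ e' ∈ orbitOf (permEdgeE (n := n) (m := m) π) e0, e'.isLeft = true := by
      intro e' he'
      rw [orbit_side _ hside he']
      exact hleft
    have hgen : genF w1 w2 π x y z (orbitOf (permEdgeE (n := n) (m := m) π) e0)
        = ∑ g ∈ suppFuns (orbitOf (permEdgeE (n := n) (m := m) π) e0),
            ∑ h ∈ suppFuns (orbitOf (permEdgeE (n := n) (m := m) π) e0),
            z ^ (w1 * ∑ e ∈ orbitOf (permEdgeE (n := n) (m := m) π) e0,
              ((if g e ≠ h (permEdge π e) then (1:ℝ) else 0)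
                - if g e ≠ h e then 1 else 0))
              * ∏ e ∈ orbitOf (permEdgeE (n := n) (m := m) π) e0, x (g e) (h e) := by
      rw [genF]
      refine Finset.sum_congr rfl fun g _ => Finset.sum_congr rfl fun h _ => ?_
      rw [deltaS_left hLall w1 w2 π g h, monU_left hLall x g h, monA_left hLall y g h, mul_one]
    rw [hgen]
    exact core_bound (permEdgeE (n := n) (m := m) π) e0 w1 x hx z hz hcard
  · intro e0 hright hcard
    have hRall : ∀ e' ∈ orbitOf (permEdgeE (n := n) (m := m) π) e0, e'.isRight = true := by
      intro e' he'
      have h := orbit_side _ hside he'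
      cases e' <;> cases e0 <;> simp_all
    have hgen : genF w1 w2 π x y z (orbitOf (permEdgeE (n := n) (m := m) π) e0)
        = ∑ g ∈ suppFuns (orbitOf (permEdgeE (n := n) (m := m) π) e0),
            ∑ h ∈ suppFuns (orbitOf (permEdgeE (n := n) (m := m) π) e0),
            z ^ (w2 * ∑ e ∈ orbitOf (permEdgeE (n := n) (m := m) π) e0,
              ((if g e ≠ h (permEdge π e) then (1:ℝ) else 0)
                - if g e ≠ h e then 1 else 0))
              * ∏ e ∈ orbitOf (permEdgeE (n := n) (m := m) π) e0, y (g e) (h e) := by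
      rw [genF]
      refine Finset.sum_congr rfl fun g _ => Finset.sum_congr rfl fun h _ => ?_
      rw [deltaS_right hRall w1 w2 π g h, monU_right hRall x g h, mul_one,
        monA_right hRall y g h]
    rw [hgen]
    exact core_bound (permEdgeE (n := n) (m := m) π) e0 w2 y hy z hz hcard

end
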